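/- Let (X, μ) be a measure space, let s : ℝ × X → ℝ be measurable, and let e_K, e_P : ℝ × X → ℝ be such that for each t ∈ ℝ the functions e_K(t,·) and e_P(t,·) are nonnegative, measurable and integrable with respect to μ. Suppose F ∈ L²(ℝ) satisfies: (1) for every λ ∈ ℝ, lim_{T→∞} ∫_{{x : s(T,x) ≤ λ}} e_K(T,x) dμ(x) = lim_{T→∞} ∫_{{x : s(T,x) ≤ λ}} e_P(T,x) dμ(x) = (1/2)∫_{(-∞,λ]} |F(σ)|² dσ; and (2) for every t ∈ ℝ, ∫_X (e_K(t,x) + e_P(t,x)) dμ(x) = ∫_ℝ |F(σ)|² dσ. Then for every ε > 0 there exist λ ∈ ℝ and T₀ ∈ ℝ such that for all T ≥ T₀, ∫_{{x : s(T,x) > λ}} (e_K(T,x) + e_P(T,x)) dμ(x) ≤ ε. -/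

import Mathlib

open MeasureTheory Filter Topology

/-- Proposition 3.1 (abstract asymptotic equipartition of energy): if the kinetic and
potential energies in the regions `{s(T,·) ≤ λ}` both converge, as `T → ∞`, to half the
mass of `|F|²` on `(-∞, λ]`, and the total energy at each time equals `‖F‖_{L²}²`, then
the total kinetic and potential energies asymptotically agree. -/
theorem local_energy_decay
    {X : Type*} [MeasurableSpace X] (μ : Measure X)
    (s eK eP : ℝ × X → ℝ) (F : ℝ → ℝ)
    (hs : Measurable s)
    (heKmeas : ∀ t : ℝ, Measurable fun x => eK (t, x))
    (hePmeas : ∀ t : ℝ, Measurable fun x => eP (t, x))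
    (heKnonneg : ∀ t : ℝ, ∀ x : X, 0 ≤ eK (t, x))
    (hePnonneg : ∀ t : ℝ, ∀ x : X, 0 ≤ eP (t, x))
    (heKint : ∀ t : ℝ, Integrable (fun x => eK (t, x)) μ)
    (hePint : ∀ t : ℝ, Integrable (fun x => eP (t, x)) μ)
    (hF : MemLp F 2 (volume : Measure ℝ))
    (hcond1K : ∀ lam : ℝ,
      Tendsto (fun T => ∫ x in {x | s (T, x) ≤ lam}, eK (T, x) ∂μ) atTop
        (𝓝 ((1 / 2) * ∫ σ in Set.Iic lam, |F σ| ^ 2)))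
    (hcond1P : ∀ lam : ℝ,
      Tendsto (fun T => ∫ x in {x | s (T, x) ≤ lam}, eP (T, x) ∂μ) atTop
        (𝓝 ((1 / 2) * ∫ σ in Set.Iic lam, |F σ| ^ 2)))
    (hcond2 : ∀ t : ℝ, ∫ x, (eK (t, x) + eP (t, x)) ∂μ = ∫ σ : ℝ, |F σ| ^ 2) :
    ∀ ε > (0 : ℝ), ∃ lam T₀ : ℝ, ∀ T ≥ T₀,
      (∫ x in {x | lam < s (T, x)}, (eK (T, x) + eP (T, x)) ∂μ) ≤ ε := by
  intro ε hε
  set g : ℝ → ℝ := fun σ => |F σ| ^ 2 with hg_def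
  have hg_int : Integrable g := by
    simpa [g, sq_abs] using hF.integrable_sq
  -- ∫ over Iic n tends to the full integral as n → ∞
  have hUnion : (⋃ n : ℕ, Set.Iic ((n : ℝ))) = Set.univ := by
    ext x; simp only [Set.mem_iUnion, Set.mem_Iic, Set.mem_univ, iff_true]
    exact exists_nat_ge x
  have htend : Tendsto (fun n : ℕ => ∫ σ in Set.Iic ((n : ℝ)), g σ) atTop
      (𝓝 (∫ σ, g σ)) := by
    have := tendsto_setIntegral_of_monotone (f := g) (μ := volume)
      (s := fun n : ℕ => Set.Iic ((n : ℝ)))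
      (fun n => measurableSet_Iic)
      (fun m n hmn => Set.Iic_subset_Iic.2 (by exact_mod_cast hmn))
      (by rw [hUnion]; exact hg_int.integrableOn)
    simpa [hUnion] using this
  -- choose λ = n with ∫ g − ∫_{Iic n} g < ε/2
  have hev : ∀ᶠ n : ℕ in atTop,
      (∫ σ, g σ) - (∫ σ in Set.Iic ((n : ℝ)), g σ) < ε / 2 := by
    have := htend.eventually (eventually_gt_nhds (show (∫ σ, g σ) - ε / 2 < ∫ σ, g σ by linarith))
    filter_upwards [this] with n hn
    linarith
  obtain ⟨n, hn⟩ := hev.exists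
  set lam : ℝ := (n : ℝ)
  -- combined convergence of interior energy to ∫_{Iic lam} g
  have hsum : Tendsto (fun T => (∫ x in {x | s (T, x) ≤ lam}, eK (T, x) ∂μ)
      + (∫ x in {x | s (T, x) ≤ lam}, eP (T, x) ∂μ)) atTop
      (𝓝 (∫ σ in Set.Iic lam, g σ)) := by
    have := (hcond1K lam).add (hcond1P lam)
    have h2 : (1 / 2) * (∫ σ in Set.Iic lam, |F σ| ^ 2)
        + (1 / 2) * (∫ σ in Set.Iic lam, |F σ| ^ 2) = ∫ σ in Set.Iic lam, g σ := by
      simp [g]; ring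
    rwa [h2] at this
  have hev2 : ∀ᶠ T : ℝ in atTop,
      (∫ σ in Set.Iic lam, g σ) - ε / 2
        < (∫ x in {x | s (T, x) ≤ lam}, eK (T, x) ∂μ)
          + (∫ x in {x | s (T, x) ≤ lam}, eP (T, x) ∂μ) := by
    exact hsum.eventually (eventually_gt_nhds (by linarith))
  obtain ⟨T₀, hT₀⟩ := hev2.exists_forall_of_atTop
  refine ⟨lam, T₀, fun T hT => ?_⟩
  have hin := hT₀ T hT
  -- decompose the total integral
  have hmeasS : MeasurableSet {x | s (T, x) ≤ lam} :=
    measurableSet_le (hs.comp (measurable_const.prodMk measurable_id)) measurable_const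
  have hint : Integrable (fun x => eK (T, x) + eP (T, x)) μ := (heKint T).add (hePint T)
  have hcompl : {x | lam < s (T, x)} = {x | s (T, x) ≤ lam}ᶜ := by
    ext x; simp [not_le]
  have hsplit : (∫ x in {x | s (T, x) ≤ lam}, (eK (T, x) + eP (T, x)) ∂μ)
      + (∫ x in {x | lam < s (T, x)}, (eK (T, x) + eP (T, x)) ∂μ)
      = ∫ x, (eK (T, x) + eP (T, x)) ∂μ := by
    rw [hcompl]; exact integral_add_compl hmeasS hint
  have haddin : (∫ x in {x | s (T, x) ≤ lam}, (eK (T, x) + eP (T, x)) ∂μ)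
      = (∫ x in {x | s (T, x) ≤ lam}, eK (T, x) ∂μ)
        + (∫ x in {x | s (T, x) ≤ lam}, eP (T, x) ∂μ) :=
    integral_add (heKint T).integrableOn (hePint T).integrableOn
  have htot : (∫ x, (eK (T, x) + eP (T, x)) ∂μ) = ∫ σ, g σ := hcond2 T
  have : (∫ x in {x | lam < s (T, x)}, (eK (T, x) + eP (T, x)) ∂μ)
      = (∫ σ, g σ) - ((∫ x in {x | s (T, x) ≤ lam}, eK (T, x) ∂μ)
        + (∫ x in {x | s (T, x) ≤ lam}, eP (T, x) ∂μ)) := by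
    rw [← htot, ← haddin]; linarith [hsplit]
  rw [this]
  have hglea : (∫ σ in Set.Iic lam, g σ) ≤ ∫ σ, g σ := by
    apply setIntegral_le_integral hg_int
    filter_upwards with σ using sq_nonneg _
  linarith
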